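/- Let ρ, σ ∈ ℂ with |ρ|, |σ| < 1/2, let c > 0 and t ≥ 0, and define P(n,t) by P(0,t) = 1 and P(n,t) = 4 conj(ρ)σ (ct/(2n) + (n-1)/n) P(n-1,t). Then F(t) := ∑_{n≥0} P(n,t) converges absolutely, satisfies F(t+s) = F(t)F(s), and F(t) = exp(-(ct/2) log(1 - 4 conj(ρ)σ)) = (1 - 4 conj(ρ)σ)^{-ct/2}. -/

import Mathlib

open Complex Filter Set Topology

namespace Stmt12Aux

noncomputable def f (a : ℂ) (n : ℕ) : ℂ := (ascPochhammer ℂ n).eval a / (Nat.factorial n : ℂ)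

lemma f_zero (a : ℂ) : f a 0 = 1 := by simp [f]

lemma f_succ (a : ℂ) (n : ℕ) : ((n : ℂ) + 1) * f a (n + 1) = (a + n) * f a n := by
  have h1 : ((Nat.factorial n : ℕ) : ℂ) ≠ 0 := Nat.cast_ne_zero.mpr (Nat.factorial_ne_zero n)
  have h2 : ((n : ℂ) + 1) ≠ 0 := Nat.cast_add_one_ne_zero n
  simp only [f, ascPochhammer_succ_eval, Nat.factorial_succ]
  push_cast
  field_simp

lemma norm_cast_succ (n : ℕ) : ‖((n : ℂ) + 1)‖ = (n : ℝ) + 1 := by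
  have : ((n : ℂ) + 1) = ((n + 1 : ℕ) : ℂ) := by push_cast; ring
  rw [this, Complex.norm_natCast]
  push_cast; ring

lemma hrec_norm (a : ℂ) (n : ℕ) :
    ((n : ℝ) + 1) * ‖f a (n + 1)‖ ≤ (‖a‖ + n) * ‖f a n‖ := by
  have h := congrArg norm (f_succ a n)
  rw [norm_mul, norm_mul, norm_cast_succ] at h
  rw [h]
  have hab : ‖a + (n : ℂ)‖ ≤ ‖a‖ + n := by
    calc ‖a + (n : ℂ)‖ ≤ ‖a‖ + ‖(n : ℂ)‖ := norm_add_le _ _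
    _ = ‖a‖ + n := by rw [Complex.norm_natCast]
  exact mul_le_mul_of_nonneg_right hab (norm_nonneg _)

lemma summable_u (a : ℂ) {r : ℝ} (h0 : 0 ≤ r) (h1 : r < 1) :
    Summable (fun n : ℕ => ((n : ℝ) + 1) * ‖f a n‖ * r ^ n) := by
  set r' : ℝ := (1 + r) / 2 with hr'
  have hr'1 : r' < 1 := by rw [hr']; linarith
  have hrr' : r < r' := by rw [hr']; linarith
  apply summable_of_ratio_norm_eventually_le hr'1
  have hq : Tendsto (fun n : ℕ => r * (((n : ℝ) + 2) * ((n : ℝ) + ‖a‖)) /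
      (((n : ℝ) + 1) * ((n : ℝ) + 1))) atTop (𝓝 r) := by
    have heq : ∀ n : ℕ, r * (((n : ℝ) + 2) * ((n : ℝ) + ‖a‖)) /
        (((n : ℝ) + 1) * ((n : ℝ) + 1))
        = r * (1 + 1 / ((n : ℝ) + 1)) * (1 + (‖a‖ - 1) / ((n : ℝ) + 1)) := by
      intro n
      have hn1 : ((n : ℝ) + 1) ≠ 0 := by positivity
      field_simp
      ring
    have h : Tendsto (fun n : ℕ => 1 / ((n : ℝ) + 1)) atTop (𝓝 0) :=
      tendsto_one_div_add_atTop_nhds_zero_nat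
    have h2 : Tendsto (fun n : ℕ => r * (1 + 1 / ((n : ℝ) + 1)) *
        (1 + (‖a‖ - 1) / ((n : ℝ) + 1))) atTop (𝓝 (r * (1 + 0) * (1 + 0))) := by
      apply Tendsto.mul
      · exact tendsto_const_nhds.mul (tendsto_const_nhds.add h)
      · apply tendsto_const_nhds.add
        have : (fun n : ℕ => (‖a‖ - 1) / ((n : ℝ) + 1)) =
            fun n : ℕ => (‖a‖ - 1) * (1 / ((n : ℝ) + 1)) := by
          funext n; ring
        rw [this]
        simpa using h.const_mul (‖a‖ - 1)
    rw [show r * (1 + 0) * (1 + 0) = r by ring] at h2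
    exact Tendsto.congr (fun n => (heq n).symm) h2
  filter_upwards [hq.eventually_lt_const hrr'] with n hn
  set N : ℝ := (n : ℝ) with hN
  have hN1 : (0 : ℝ) < N + 1 := by positivity
  have hmul : r * ((N + 2) * (N + ‖a‖)) < r' * ((N + 1) * (N + 1)) := by
    rwa [div_lt_iff₀ (by positivity)] at hn
  set X : ℝ := ‖f a (n + 1)‖ with hX
  set Y : ℝ := ‖f a n‖ with hY
  have hX0 : 0 ≤ X := norm_nonneg _
  have hY0 : 0 ≤ Y := norm_nonneg _
  have hrec : (N + 1) * X ≤ (‖a‖ + N) * Y := hrec_norm a n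
  have hTn1 : ((n + 1 : ℕ) : ℝ) + 1 = N + 2 := by push_cast; ring
  simp only [Real.norm_eq_abs]
  have e1 : |(((n + 1 : ℕ) : ℝ) + 1) * X * r ^ (n + 1)| = (N + 2) * X * r ^ (n + 1) := by
    rw [_root_.abs_of_nonneg (by positivity : (0:ℝ) ≤ (((n + 1 : ℕ) : ℝ) + 1) * X * r ^ (n + 1))]
    rw [hTn1]
  have e2 : |(N + 1) * Y * r ^ n| = (N + 1) * Y * r ^ n :=
    _root_.abs_of_nonneg (by positivity : (0:ℝ) ≤ (N + 1) * Y * r ^ n)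
  rw [e1, e2]
  have main : ((N + 2) * X * r ^ (n + 1)) * (N + 1)
      ≤ (r' * ((N + 1) * Y * r ^ n)) * (N + 1) := by
    calc ((N + 2) * X * r ^ (n + 1)) * (N + 1)
        = ((N + 1) * X) * ((N + 2) * r * r ^ n) := by rw [pow_succ]; ring
      _ ≤ ((‖a‖ + N) * Y) * ((N + 2) * r * r ^ n) :=
          mul_le_mul_of_nonneg_right hrec (by positivity)
      _ = (r * ((N + 2) * (N + ‖a‖))) * (Y * r ^ n) := by ring
      _ ≤ (r' * ((N + 1) * (N + 1))) * (Y * r ^ n) :=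
          mul_le_mul_of_nonneg_right hmul.le (by positivity)
      _ = (r' * ((N + 1) * Y * r ^ n)) * (N + 1) := by ring
  exact le_of_mul_le_mul_right main hN1

/-- The generalized binomial series. -/
lemma hasSum_f (a : ℂ) {z : ℂ} (hz : ‖z‖ < 1) :
    HasSum (fun n => f a n * z ^ n) (Complex.exp (-a * Complex.log (1 - z))) := by
  rcases eq_or_ne z 0 with rfl | hz0
  · have : Complex.exp (-a * Complex.log (1 - 0)) = 1 := by
      simp [Complex.log_one]
    rw [this]
    have h1 : (fun n => f a n * (0 : ℂ) ^ n) 0 = 1 := by simp [f_zero]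
    have := hasSum_single (f := fun n => f a n * (0 : ℂ) ^ n) 0
      (fun b hb => by simp [zero_pow hb])
    rw [show f a 0 * (0 : ℂ) ^ 0 = 1 by simp [f_zero]] at this
    exact this
  · -- setup
    have hz0' : (0 : ℝ) < ‖z‖ := norm_pos_iff.mpr hz0
    set r : ℝ := (1 + ‖z‖) / 2 with hr
    have hzr : ‖z‖ < r := by rw [hr]; linarith
    have hr1 : r < 1 := by rw [hr]; linarith
    have hr0 : 0 < r := lt_trans hz0' hzr
    set R : ℝ := r / ‖z‖ with hR
    have hR1 : 1 < R := (one_lt_div hz0').mpr hzr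
    have hRz : R * ‖z‖ = r := div_mul_cancel₀ r (ne_of_gt hz0')
    set t : Set ℝ := Ioo (-R) R with ht
    set g : ℕ → ℝ → ℂ := fun n y => f a n * z ^ n * (y : ℂ) ^ n with hg
    set g' : ℕ → ℝ → ℂ := fun n y => f a n * z ^ n * ((n : ℂ) * (y : ℂ) ^ (n - 1)) with hg'
    set u : ℕ → ℝ := fun n => ((n : ℝ) + 1) * ‖f a n‖ * r ^ n with hu
    have hus : Summable u := summable_u a hr0.le hr1
    have hderiv : ∀ (n : ℕ) (y : ℝ), HasDerivAt (g n) (g' n y) y := by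
      intro n y
      have h1 : HasDerivAt (fun w : ℂ => w ^ n) ((n : ℂ) * (y : ℂ) ^ (n - 1)) (y : ℂ) :=
        hasDerivAt_pow n _
      have h2 := h1.comp_ofReal
      exact h2.const_mul (f a n * z ^ n)
    have hbound : ∀ (n : ℕ) (y : ℝ), y ∈ t → ‖g' n y‖ ≤ u n := by
      intro n y hy
      have hyR : |y| < R := abs_lt.mpr ⟨hy.1, hy.2⟩
      have hnorm : ‖g' n y‖ = ‖f a n‖ * ‖z‖ ^ n * ((n : ℝ) * |y| ^ (n - 1)) := by
        simp only [hg', norm_mul, norm_pow, Complex.norm_natCast, Complex.norm_real,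
          Real.norm_eq_abs]
      rw [hnorm, hu]
      rcases n with _ | m
      · simp
      · have h1 : |y| ^ m ≤ R ^ m := pow_le_pow_left₀ (_root_.abs_nonneg y) hyR.le m
        have h2 : ‖z‖ ^ (m + 1) * R ^ m = ‖z‖ * r ^ m := by
          rw [pow_succ]
          calc ‖z‖ ^ m * ‖z‖ * R ^ m = (R * ‖z‖) ^ m * ‖z‖ := by rw [mul_pow]; ring
            _ = ‖z‖ * r ^ m := by rw [hRz]; ring
        have h3 : ‖z‖ * r ^ m ≤ r ^ (m + 1) := by
          rw [pow_succ]
          calc ‖z‖ * r ^ m ≤ r * r ^ m := mul_le_mul_of_nonneg_right hzr.le (by positivity)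
            _ = r ^ m * r := by ring
        have hsimp : (m + 1 : ℕ) - 1 = m := rfl
        rw [hsimp]
        push_cast
        calc ‖f a m.succ‖ * ‖z‖ ^ (m + 1) * (((m : ℝ) + 1) * |y| ^ m)
            ≤ ‖f a m.succ‖ * ‖z‖ ^ (m + 1) * (((m : ℝ) + 1) * R ^ m) := by
              apply mul_le_mul_of_nonneg_left _ (by positivity)
              exact mul_le_mul_of_nonneg_left h1 (by positivity)
          _ = ((m : ℝ) + 1) * ‖f a m.succ‖ * (‖z‖ ^ (m + 1) * R ^ m) := by ring
          _ = ((m : ℝ) + 1) * ‖f a m.succ‖ * (‖z‖ * r ^ m) := by rw [h2]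
          _ ≤ ((m : ℝ) + 1) * ‖f a m.succ‖ * r ^ (m + 1) := by
              apply mul_le_mul_of_nonneg_left h3 (by positivity)
          _ ≤ (((m : ℝ) + 1) + 1) * ‖f a m.succ‖ * r ^ (m + 1) := by
              apply mul_le_mul_of_nonneg_right _ (by positivity)
              apply mul_le_mul_of_nonneg_right _ (norm_nonneg _)
              linarith
    have hopen : IsOpen t := isOpen_Ioo
    have hconn : IsPreconnected t := (convex_Ioo _ _).isPreconnected
    have h0t : (0 : ℝ) ∈ t := ⟨by linarith, by linarith⟩
    have h1t : (1 : ℝ) ∈ t := ⟨by linarith, hR1⟩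
    have hIcc : Icc (0 : ℝ) 1 ⊆ t := fun x hx => ⟨by linarith [hx.1], by linarith [hx.2]⟩
    have hg0sum : Summable (fun n => g n 0) := by
      apply summable_of_ne_finset_zero (s := {0})
      intro n hn
      have : n ≠ 0 := by simpa using hn
      simp [hg, zero_pow this]
    have hderiv' : ∀ (n : ℕ) (y : ℝ), y ∈ t → HasDerivAt (g n) (g' n y) y :=
      fun n y _ => hderiv n y
    have hsumg : ∀ y ∈ t, Summable (fun n => g n y) := fun y hy =>
      summable_of_summable_hasDerivAt_of_isPreconnected hus hopen hconn hderiv' hbound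
        h0t hg0sum hy
    have hsumg' : ∀ y ∈ t, Summable (fun n => g' n y) := fun y hy =>
      Summable.of_norm_bounded hus (fun n => hbound n y hy)
    set φ : ℝ → ℂ := fun y => ∑' n, g n y with hφ
    have hφderiv : ∀ y ∈ t, HasDerivAt φ (∑' n, g' n y) y := fun y hy =>
      hasDerivAt_tsum_of_isPreconnected hus hopen hconn hderiv' hbound h0t hg0sum hy
    -- the ODE
    have hODE : ∀ y ∈ t, (1 - (y : ℂ) * z) * (∑' n, g' n y) = a * z * φ y := by
      intro y hy
      set S : ℂ := ∑' n, g' n y with hS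
      have hzero : g' 0 y = 0 := by simp [hg']
      have hsplit : S = g' 0 y + ∑' n, g' (n + 1) y := Summable.tsum_eq_zero_add (hsumg' y hy)
      have hterm : ∀ n : ℕ, g' (n + 1) y = a * z * g n y + (z * y) * g' n y := by
        intro n
        have hfs := f_succ a n
        have h1 : g' (n + 1) y = (((n : ℂ) + 1) * f a (n + 1)) * z ^ (n + 1) * (y : ℂ) ^ n := by
          simp only [hg']
          have : (n + 1 : ℕ) - 1 = n := rfl
          rw [this]
          push_cast
          ring
        rw [h1, hfs]
        simp only [hg, hg']
        rcases n with _ | m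
        · simp; ring
        · have : (m + 1 + 1 : ℕ) - 1 = m + 1 := rfl
          have h2 : (m + 1 : ℕ) - 1 = m := rfl
          rw [h2]
          push_cast
          ring
      have hsum1 : Summable (fun n => a * z * g n y) := (hsumg y hy).mul_left _
      have hsum2 : Summable (fun n => (z * (y : ℂ)) * g' n y) := (hsumg' y hy).mul_left _
      have : ∑' n, g' (n + 1) y = a * z * φ y + (z * y) * S := by
        calc ∑' n, g' (n + 1) y = ∑' n, (a * z * g n y + (z * y) * g' n y) := by
              exact tsum_congr hterm
          _ = (∑' n, a * z * g n y) + ∑' n, (z * (y : ℂ)) * g' n y := Summable.tsum_add hsum1 hsum2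
          _ = a * z * φ y + (z * y) * S := by
              rw [tsum_mul_left, tsum_mul_left]
      have hSeq : S = a * z * φ y + (z * y) * S := by
        conv_lhs => rw [hsplit]
        rw [hzero, zero_add, this]
      linear_combination hSeq
    -- the auxiliary function ψ
    have hslit : ∀ y ∈ t, 1 - (y : ℂ) * z ∈ Complex.slitPlane := by
      intro y hy
      have hyR : |y| < R := abs_lt.mpr ⟨hy.1, hy.2⟩
      apply Complex.mem_slitPlane_iff.mpr
      left
      have hre : (1 - (y : ℂ) * z).re = 1 - y * z.re := by
        simp [Complex.sub_re, Complex.mul_re]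
      rw [hre]
      have h1 : y * z.re ≤ |y| * |z.re| := by
        calc y * z.re ≤ |y * z.re| := le_abs_self _
          _ = |y| * |z.re| := _root_.abs_mul _ _
      have h2 : |z.re| ≤ ‖z‖ := Complex.abs_re_le_norm z
      have h3 : |y| * |z.re| ≤ R * ‖z‖ :=
        mul_le_mul hyR.le h2 (_root_.abs_nonneg _) (by positivity)
      rw [hRz] at h3
      linarith
    have hne : ∀ y ∈ t, 1 - (y : ℂ) * z ≠ 0 := fun y hy =>
      Complex.slitPlane_ne_zero (hslit y hy)
    set ψ : ℝ → ℂ := fun y => φ y * Complex.exp (a * Complex.log (1 - (y : ℂ) * z)) with hψ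
    have hψderiv : ∀ y ∈ t, HasDerivAt ψ 0 y := by
      intro y hy
      have hinner : HasDerivAt (fun y : ℝ => 1 - (y : ℂ) * z) (-z) y := by
        have h1 : HasDerivAt (fun w : ℂ => w * z) z (y : ℂ) := by
          simpa using (hasDerivAt_id (y : ℂ)).mul_const z
        exact (h1.comp_ofReal).const_sub 1
      have hlog : HasDerivAt (fun y : ℝ => Complex.log (1 - (y : ℂ) * z))
          (-z / (1 - (y : ℂ) * z)) y := hinner.clog_real (hslit y hy)
      have hexp : HasDerivAt (fun y : ℝ => Complex.exp (a * Complex.log (1 - (y : ℂ) * z)))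
          (Complex.exp (a * Complex.log (1 - (y : ℂ) * z)) * (a * (-z / (1 - (y : ℂ) * z)))) y :=
        (hlog.const_mul a).cexp
      have hmul := (hφderiv y hy).mul hexp
      have hval : (∑' n, g' n y) * Complex.exp (a * Complex.log (1 - (y : ℂ) * z)) +
          φ y * (Complex.exp (a * Complex.log (1 - (y : ℂ) * z)) *
            (a * (-z / (1 - (y : ℂ) * z)))) = 0 := by
        have hO := hODE y hy
        have hE := hne y hy
        field_simp
        linear_combination Complex.exp (a * Complex.log (1 - (y : ℂ) * z)) * hO
      rw [hval] at hmul
      exact hmul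
    have hconst : ψ 1 = ψ 0 := by
      have hcont : ContinuousOn ψ (Icc 0 1) := fun x hx =>
        ((hψderiv x (hIcc hx)).continuousAt).continuousWithinAt
      have hd : ∀ x ∈ Ico (0 : ℝ) 1, HasDerivWithinAt ψ 0 (Ici x) x := fun x hx =>
        (hψderiv x (hIcc ⟨hx.1, hx.2.le⟩)).hasDerivWithinAt
      exact constant_of_has_deriv_right_zero hcont hd 1 (by norm_num)
    have hφ0 : φ 0 = 1 := by
      have h00 : (∑' n, g n 0) = g 0 0 :=
        tsum_eq_single 0 (fun n hn => by simp [hg, zero_pow hn])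
      show (∑' n, g n 0) = 1
      rw [h00]
      simp [hg, f_zero]
    have hψ0 : ψ 0 = 1 := by
      simp only [hψ, hφ0]
      norm_num [Complex.log_one]
    have hψ1 : φ 1 * Complex.exp (a * Complex.log (1 - z)) = 1 := by
      have : ψ 1 = φ 1 * Complex.exp (a * Complex.log (1 - z)) := by
        simp [hψ]
      rw [← this, hconst, hψ0]
    have hφ1 : φ 1 = Complex.exp (-a * Complex.log (1 - z)) := by
      rw [neg_mul, Complex.exp_neg]
      exact eq_inv_of_mul_eq_one_left hψ1
    have hgs : (fun n => g n 1) = fun n => f a n * z ^ n := by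
      funext n; simp [hg]
    have hts : HasSum (fun n => f a n * z ^ n) (∑' n, f a n * z ^ n) := by
      have := (hsumg 1 h1t).hasSum
      rwa [hgs] at this
    have h2 : (∑' n, f a n * z ^ n) = Complex.exp (-a * Complex.log (1 - z)) := by
      have h3 : (∑' n, g n 1) = ∑' n, f a n * z ^ n := tsum_congr fun n => by simp [hg]
      rw [← h3]
      exact hφ1
    rwa [h2] at hts

end Stmt12Aux




/-- The scalar product of quadratic exponential vectors with constant test functions:
`F(t) = ∑ P n t` converges absolutely, is multiplicative in `t`, and equals
`exp(-(ct/2) log(1 - 4 conj(ρ)σ)) = (1 - 4 conj(ρ)σ)^(-ct/2)`. -/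
theorem stmt12 (ρ σ : ℂ) (hρ : ‖ρ‖ < 1 / 2) (hσ : ‖σ‖ < 1 / 2)
    (c : ℝ) (hc : 0 < c) (P : ℕ → ℝ → ℂ)
    (hP0 : ∀ t : ℝ, P 0 t = 1)
    (hPrec : ∀ n : ℕ, 1 ≤ n → ∀ t : ℝ, P n t =
      4 * (starRingEnd ℂ) ρ * σ *
        (((c * t / (2 * n) : ℝ) : ℂ) + ((n : ℂ) - 1) / (n : ℂ)) * P (n - 1) t) :
    ∀ t s : ℝ, 0 ≤ t → 0 ≤ s →
      Summable (fun n => ‖P n t‖) ∧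
      (∑' n, P n (t + s)) = (∑' n, P n t) * (∑' n, P n s) ∧
      (∑' n, P n t) =
        Complex.exp (((-(c * t / 2) : ℝ) : ℂ) * Complex.log (1 - 4 * (starRingEnd ℂ) ρ * σ)) ∧
      (∑' n, P n t) = (1 - 4 * (starRingEnd ℂ) ρ * σ) ^ ((-(c * t / 2) : ℝ) : ℂ) := by
  intro t s ht hs
  set z : ℂ := 4 * (starRingEnd ℂ) ρ * σ with hzdef
  have hz : ‖z‖ < 1 := by
    have h1 : ‖z‖ = 4 * ‖ρ‖ * ‖σ‖ := by
      rw [hzdef]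
      simp only [norm_mul, Complex.norm_conj]
      norm_num
    rw [h1]
    nlinarith [norm_nonneg ρ, norm_nonneg σ]
  have hne1z : (1 : ℂ) - z ≠ 0 := by
    intro h
    have hz1 : z = 1 := by linear_combination -h
    rw [hz1] at hz
    simp at hz
  -- identification of P with the binomial coefficients
  have hPf : ∀ (u : ℝ) (n : ℕ), P n u = Stmt12Aux.f ((c * u / 2 : ℝ) : ℂ) n * z ^ n := by
    intro u n
    induction n with
    | zero => simp [hP0, Stmt12Aux.f_zero]
    | succ n ih =>
      set a : ℂ := ((c * u / 2 : ℝ) : ℂ) with ha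
      rw [hPrec (n + 1) (Nat.succ_le_succ (Nat.zero_le n)) u]
      simp only [Nat.add_sub_cancel]
      rw [ih]
      have hn : ((n : ℂ) + 1) ≠ 0 := Nat.cast_add_one_ne_zero n
      have hfs := Stmt12Aux.f_succ a n
      set A : ℂ := (((c * u / (2 * ((n : ℕ) + 1 : ℕ)) : ℝ)) : ℂ) +
        (((n + 1 : ℕ) : ℂ) - 1) / ((n + 1 : ℕ) : ℂ) with hA
      have hAn : ((n : ℂ) + 1) * A = a + n := by
        rw [hA, ha]
        have h2n : ((2 : ℝ) * ((n : ℕ) + 1 : ℕ)) ≠ 0 := by positivity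
        push_cast
        field_simp
        ring
      have key : ((n : ℂ) + 1) * (z * A * (Stmt12Aux.f a n * z ^ n)) =
          ((n : ℂ) + 1) * (Stmt12Aux.f a (n + 1) * z ^ (n + 1)) := by
        calc ((n : ℂ) + 1) * (z * A * (Stmt12Aux.f a n * z ^ n))
            = (((n : ℂ) + 1) * A) * Stmt12Aux.f a n * z ^ (n + 1) := by rw [pow_succ]; ring
          _ = (a + n) * Stmt12Aux.f a n * z ^ (n + 1) := by rw [hAn]
          _ = (((n : ℂ) + 1) * Stmt12Aux.f a (n + 1)) * z ^ (n + 1) := by rw [hfs]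
          _ = ((n : ℂ) + 1) * (Stmt12Aux.f a (n + 1) * z ^ (n + 1)) := by ring
      exact mul_left_cancel₀ hn key
  -- the three sums
  have hsum : ∀ u : ℝ, HasSum (fun n => P n u)
      (Complex.exp (((-(c * u / 2) : ℝ) : ℂ) * Complex.log (1 - z))) := by
    intro u
    have h1 := Stmt12Aux.hasSum_f ((c * u / 2 : ℝ) : ℂ) hz
    have h2 : -((c * u / 2 : ℝ) : ℂ) = ((-(c * u / 2) : ℝ) : ℂ) := by push_cast; ring
    rw [h2] at h1
    have h3 : (fun n => P n u) = fun n => Stmt12Aux.f ((c * u / 2 : ℝ) : ℂ) n * z ^ n :=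
      funext (hPf u)
    rw [h3]
    exact h1
  have htsum : ∀ u : ℝ, (∑' n, P n u) =
      Complex.exp (((-(c * u / 2) : ℝ) : ℂ) * Complex.log (1 - z)) :=
    fun u => (hsum u).tsum_eq
  refine ⟨?_, ?_, htsum t, ?_⟩
  · -- summability of absolute values
    have hU := Stmt12Aux.summable_u ((c * t / 2 : ℝ) : ℂ) (norm_nonneg z) hz
    apply Summable.of_nonneg_of_le (fun n => norm_nonneg _) _ hU
    intro n
    rw [hPf t n]
    have h1 : ‖Stmt12Aux.f ((c * t / 2 : ℝ) : ℂ) n * z ^ n‖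
        = ‖Stmt12Aux.f ((c * t / 2 : ℝ) : ℂ) n‖ * ‖z‖ ^ n := by
      rw [norm_mul, norm_pow]
    rw [h1]
    have h2 : (1 : ℝ) ≤ (n : ℝ) + 1 := by
      have := Nat.cast_nonneg (α := ℝ) n
      linarith
    have h3 : (0 : ℝ) ≤ ‖Stmt12Aux.f ((c * t / 2 : ℝ) : ℂ) n‖ * ‖z‖ ^ n :=
      mul_nonneg (norm_nonneg _) (pow_nonneg (norm_nonneg z) n)
    calc ‖Stmt12Aux.f ((c * t / 2 : ℝ) : ℂ) n‖ * ‖z‖ ^ n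
        = 1 * (‖Stmt12Aux.f ((c * t / 2 : ℝ) : ℂ) n‖ * ‖z‖ ^ n) := by ring
      _ ≤ ((n : ℝ) + 1) * (‖Stmt12Aux.f ((c * t / 2 : ℝ) : ℂ) n‖ * ‖z‖ ^ n) :=
          mul_le_mul_of_nonneg_right h2 h3
      _ = ((n : ℝ) + 1) * ‖Stmt12Aux.f ((c * t / 2 : ℝ) : ℂ) n‖ * ‖z‖ ^ n := by ring
  · -- multiplicativity
    rw [htsum t, htsum s, htsum (t + s), ← Complex.exp_add]
    congr 1
    push_cast
    ring
  · -- cpow form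
    rw [htsum t, Complex.cpow_def_of_ne_zero hne1z, mul_comm]
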